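/- Under the setup of the rank-one Birman–Schwinger principle, if $\Delta(k, E_{\min}(k)) := 1 - \mu(2\pi)^{-3}\int_{\mathbb{T}^3}(E_k(q)-E_{\min}(k))^{-1}dq < 0$ (the integral possibly being $+\infty$, in which case the condition holds), then $h(k) = h^0(k) - \mu v$ has exactly one eigenvalue $z(k)$ in $(-\infty, E_{\min}(k))$. -/

import Mathlib

open Real MeasureTheory Set

/-- The torus `𝕋³ = (-π, π]³` as a subset of `ℝ³`. -/
noncomputable def T3 : Set (Fin 3 → ℝ) := Set.univ.pi fun _ => Set.Ioc (-Real.pi) Real.pi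

/-- The measure on the torus: Lebesgue measure restricted to `(-π,π]³`. -/
noncomputable def μT : Measure (Fin 3 → ℝ) := MeasureTheory.volume.restrict T3

instance : IsFiniteMeasure μT := by
  constructor
  rw [μT, Measure.restrict_apply_univ, T3, volume_pi_pi]
  simp [Real.volume_Ioc]

set_option maxHeartbeats 2000000 in
/-- If `Δ(k, Emin) = 1 - μ (2π)⁻³ ∫ (E q - Emin)⁻¹ dq < 0` (the integral possibly
being `+∞`, in which case the condition holds), then `h(k) = h⁰(k) - μ v` has
exactly one eigenvalue `z(k)` in `(-∞, Emin)`. -/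
theorem rank_one_bound_state_exists_unique (μc Emin C : ℝ) (hμ : 0 < μc)
    (E : (Fin 3 → ℝ) → ℝ) (hEmeas : Measurable E)
    (hlow : ∀ᵐ q ∂μT, Emin ≤ E q)
    (hupp : ∀ᵐ q ∂μT, E q ≤ C)
    (hessInf : ∀ ε > (0 : ℝ), 0 < μT {q | E q < Emin + ε})
    (h0 v : Lp ℝ 2 μT →L[ℝ] Lp ℝ 2 μT)
    (hh0 : ∀ f : Lp ℝ 2 μT, (h0 f : (Fin 3 → ℝ) → ℝ) =ᵐ[μT] fun p => E p * f p)
    (hv : ∀ f : Lp ℝ 2 μT,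
        (v f : (Fin 3 → ℝ) → ℝ) =ᵐ[μT] fun _ => (2 * Real.pi) ^ (-3 : ℤ) * ∫ q, f q ∂μT)
    (hneg : 1 < ENNReal.ofReal (μc * (2 * Real.pi) ^ (-3 : ℤ)) *
        ∫⁻ q, ENNReal.ofReal ((E q - Emin)⁻¹) ∂μT) :
    ∃! z : ℝ, z < Emin ∧
      Module.End.HasEigenvalue ((h0 - μc • v : Lp ℝ 2 μT →L[ℝ] Lp ℝ 2 μT) :
        Lp ℝ 2 μT →ₗ[ℝ] Lp ℝ 2 μT) z := by
  classical
  set c : ℝ := (2 * Real.pi) ^ (-3 : ℤ) with hc_def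
  have hc : 0 < c := zpow_pos (by positivity) _
  set C' : ℝ := max C Emin with hC'_def
  have hEminC' : Emin ≤ C' := le_max_right _ _
  have hupp' : ∀ᵐ q ∂μT, E q ≤ C' := hupp.mono fun q h => h.trans (le_max_left _ _)
  have hμT_pos : 0 < μT Set.univ :=
    lt_of_lt_of_le (hessInf 1 one_pos) (measure_mono (subset_univ _))
  have hμT_fin : μT Set.univ < ⊤ := measure_lt_top _ _
  set M : ℝ := (μT Set.univ).toReal with hM_def
  have hM : 0 < M := ENNReal.toReal_pos hμT_pos.ne' hμT_fin.ne
  set φ : ℝ → (Fin 3 → ℝ) → ℝ := fun z q => (E q - z)⁻¹ with hφ_def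
  have hφmeas : ∀ z, Measurable (φ z) := fun z => (hEmeas.sub measurable_const).inv
  have hbounds : ∀ z < Emin, ∀ᵐ q ∂μT, (C' - z)⁻¹ ≤ φ z q ∧ φ z q ≤ (Emin - z)⁻¹ := by
    intro z hz
    filter_upwards [hlow, hupp'] with q h1 h2
    have h3 : 0 < E q - z := by linarith
    exact ⟨inv_anti₀ h3 (by linarith), inv_anti₀ (by linarith) (by linarith)⟩
  have hφpos : ∀ z < Emin, ∀ᵐ q ∂μT, 0 < φ z q := by
    intro z hz
    filter_upwards [hlow] with q h1
    exact inv_pos.mpr (by linarith)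
  have hint : ∀ z < Emin, Integrable (φ z) μT := by
    intro z hz
    refine Integrable.mono' (integrable_const ((Emin - z)⁻¹))
      ((hφmeas z).aestronglyMeasurable) ?_
    filter_upwards [hbounds z hz, hφpos z hz] with q hq hq'
    rw [Real.norm_eq_abs, abs_of_nonneg hq'.le]
    exact hq.2
  set g : ℝ → ℝ := fun z => μc * c * ∫ q, φ z q ∂μT with hg_def
  -- strict monotonicity
  have hmono : StrictMonoOn g (Iio Emin) := by
    intro z1 h1 z2 h2 h12
    simp only [mem_Iio] at h1 h2
    set δ : ℝ := (C' - z2)⁻¹ - (C' - z1)⁻¹ with hδ_def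
    have hδpos : 0 < δ := by
      have : (C' - z1)⁻¹ < (C' - z2)⁻¹ := by
        apply inv_strictAnti₀ (by linarith) (by linarith)
      simpa [hδ_def] using sub_pos.mpr this
    have hptwise : ∀ᵐ q ∂μT, δ ≤ φ z2 q - φ z1 q := by
      filter_upwards [hlow, hupp'] with q hq1 hq2
      have e1 : 0 < E q - z1 := by linarith
      have e2 : 0 < E q - z2 := by linarith
      have e3 : 0 < C' - z1 := by linarith
      have e4 : 0 < C' - z2 := by linarith
      have ne1 : E q - z1 ≠ 0 := ne_of_gt e1
      have ne2 : E q - z2 ≠ 0 := ne_of_gt e2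
      have ne3 : C' - z1 ≠ 0 := ne_of_gt e3
      have ne4 : C' - z2 ≠ 0 := ne_of_gt e4
      have key1 : φ z2 q - φ z1 q = (z2 - z1) * ((E q - z1)⁻¹ * (E q - z2)⁻¹) := by
        simp only [hφ_def]
        field_simp
        ring_nf
      have key2 : δ = (z2 - z1) * ((C' - z1)⁻¹ * (C' - z2)⁻¹) := by
        rw [hδ_def]
        field_simp
        ring_nf
      rw [key1, key2]
      apply mul_le_mul_of_nonneg_left _ (by linarith)
      apply mul_le_mul (inv_anti₀ e1 (by linarith)) (inv_anti₀ e2 (by linarith))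
        (inv_nonneg.mpr e4.le) (inv_nonneg.mpr e1.le)
    have hIle : δ * M ≤ ∫ q, (φ z2 q - φ z1 q) ∂μT := by
      have := integral_mono_ae (integrable_const δ) ((hint z2 h2).sub (hint z1 h1)) hptwise
      simpa [integral_const, hM_def, mul_comm, Measure.real] using this
    have hsub : ∫ q, (φ z2 q - φ z1 q) ∂μT = (∫ q, φ z2 q ∂μT) - ∫ q, φ z1 q ∂μT :=
      integral_sub (hint z2 h2) (hint z1 h1)
    have : (∫ q, φ z1 q ∂μT) < ∫ q, φ z2 q ∂μT := by
      nlinarith [hIle, hsub, hδpos, hM]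
    have hpos : 0 < μc * c := by positivity
    simp only [hg_def]
    nlinarith [this, hpos]
  -- continuity
  have hcont : ∀ z ∈ Iio Emin, ContinuousAt g z := by
    intro z hz
    simp only [mem_Iio] at hz
    set m : ℝ := (z + Emin) / 2 with hm_def
    have hzm : z < m := by simp only [hm_def]; linarith
    have hmE : m < Emin := by simp only [hm_def]; linarith
    have hI : ContinuousAt (fun x => ∫ q, φ x q ∂μT) z := by
      apply continuousAt_of_dominated (bound := fun _ => (Emin - m)⁻¹)
      · filter_upwards [Iio_mem_nhds hzm] with x _
        exact (hφmeas x).aestronglyMeasurable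
      · filter_upwards [Iio_mem_nhds hzm] with x hx
        filter_upwards [hlow] with q hq
        have h1 : 0 < E q - x := by
          simp only [mem_Iio] at hx; linarith
        rw [hφ_def, Real.norm_eq_abs, abs_of_nonneg (inv_nonneg.mpr h1.le)]
        simp only [mem_Iio] at hx
        exact inv_anti₀ (by linarith) (by linarith)
      · exact integrable_const _
      · filter_upwards [hlow] with q hq
        have h1 : E q - z ≠ 0 := ne_of_gt (by linarith)
        exact ((continuousAt_const.sub continuousAt_id).inv₀ h1)
    exact continuousAt_const.mul hI
  -- the operator
  set H : Lp ℝ 2 μT →L[ℝ] Lp ℝ 2 μT := h0 - μc • v with hH_def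
  -- characterization of eigenvalues below Emin
  have key : ∀ z < Emin,
      (Module.End.HasEigenvalue (H : Lp ℝ 2 μT →ₗ[ℝ] Lp ℝ 2 μT) z ↔ g z = 1) := by
    intro z hz
    constructor
    · intro hev
      obtain ⟨f, hf⟩ := hev.exists_hasEigenvector
      have hfe : H f = z • f := hf.apply_eq_smul
      have hfne : f ≠ 0 := hf.right
      -- a.e. identity
      have hae : ∀ᵐ q ∂μT,
          E q * f q - μc * (c * ∫ p, f p ∂μT) = z * f q := by
        have hsub : ⇑(H f) =ᵐ[μT] ⇑(h0 f) - ⇑(μc • (v f)) := by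
          rw [hH_def, ContinuousLinearMap.sub_apply, ContinuousLinearMap.smul_apply]
          exact Lp.coeFn_sub _ _
        have hsmul : ⇑(μc • (v f)) =ᵐ[μT] μc • ⇑(v f) := Lp.coeFn_smul _ _
        have hzs : ⇑(z • f) =ᵐ[μT] z • ⇑f := Lp.coeFn_smul _ _
        have hHz : ⇑(H f) =ᵐ[μT] ⇑(z • f) := by rw [hfe]
        filter_upwards [hsub, hsmul, hzs, hh0 f, hv f, hHz] with q e1 e2 e3 e4 e5 e6
        have : (⇑(h0 f) - ⇑(μc • (v f))) q = (z • ⇑f) q := by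
          rw [← e1, e6, e3]
        simpa [e4, e2, e5, mul_assoc] using this
      set A : ℝ := μc * (c * ∫ p, f p ∂μT) with hA_def
      have hfa : ∀ᵐ q ∂μT, f q = A * φ z q := by
        filter_upwards [hae, hlow] with q e1 e2
        have hne : E q - z ≠ 0 := ne_of_gt (by linarith)
        have : (E q - z) * f q = A := by nlinarith [e1]
        simp only [hφ_def]
        rw [eq_mul_inv_iff_mul_eq₀ hne]
        linear_combination this
      by_cases hA : A = 0
      · exfalso
        apply hfne
        rw [Lp.eq_zero_iff_ae_eq_zero]
        filter_upwards [hfa] with q e1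
        simp [e1, hA]
      · have hIf : ∫ p, f p ∂μT = A * ∫ q, φ z q ∂μT := by
          rw [integral_congr_ae hfa, integral_const_mul]
        have hAeq : A * 1 = A * (μc * c * ∫ q, φ z q ∂μT) := by
          calc A * 1 = A := mul_one A
            _ = μc * (c * ∫ p, f p ∂μT) := hA_def
            _ = μc * (c * (A * ∫ q, φ z q ∂μT)) := by rw [hIf]
            _ = A * (μc * c * ∫ q, φ z q ∂μT) := by ring
        have h1 := mul_left_cancel₀ hA hAeq
        simp only [hg_def]
        linarith [h1]
    · intro hgz
      have hmem : MemLp (φ z) 2 μT := by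
        apply MemLp.of_bound ((hφmeas z).aestronglyMeasurable) ((Emin - z)⁻¹)
        filter_upwards [hbounds z hz, hφpos z hz] with q hq hq'
        rw [Real.norm_eq_abs, abs_of_nonneg hq'.le]
        exact hq.2
      set f : Lp ℝ 2 μT := hmem.toLp (φ z) with hf_def
      have hfφ : ⇑f =ᵐ[μT] φ z := hmem.coeFn_toLp
      have hfne : f ≠ 0 := by
        intro hzero
        have h1 : ⇑f =ᵐ[μT] 0 := by
          rw [hzero] at hfφ ⊢
          exact Lp.coeFn_zero _ _ _
        have hFalse : ∀ᵐ q ∂μT, False := by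
          filter_upwards [h1.symm.trans hfφ, hφpos z hz] with q e1 e2
          rw [← e1] at e2
          simp at e2
        rw [ae_iff] at hFalse
        simp at hFalse
        exact absurd hFalse (by simpa using hμT_pos.ne')
      have hIf : ∫ p, f p ∂μT = ∫ q, φ z q ∂μT := integral_congr_ae hfφ
      have hone : μc * (c * ∫ p, f p ∂μT) = 1 := by
        rw [hIf, ← mul_assoc]
        simpa [hg_def] using hgz
      have heq : H f = z • f := by
        apply Lp.ext
        have hsub : ⇑(H f) =ᵐ[μT] ⇑(h0 f) - ⇑(μc • (v f)) := by
          rw [hH_def, ContinuousLinearMap.sub_apply, ContinuousLinearMap.smul_apply]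
          exact Lp.coeFn_sub _ _
        have hsmul : ⇑(μc • (v f)) =ᵐ[μT] μc • ⇑(v f) := Lp.coeFn_smul _ _
        have hzs : ⇑(z • f) =ᵐ[μT] z • ⇑f := Lp.coeFn_smul _ _
        filter_upwards [hsub, hsmul, hzs, hh0 f, hv f, hfφ, hlow] with q e1 e2 e3 e4 e5 e6 e7
        rw [e1]
        simp only [Pi.sub_apply, e2, Pi.smul_apply, smul_eq_mul, e4, e5, e3, e6]
        have hne : E q - z ≠ 0 := ne_of_gt (by linarith)
        have hinv : (E q - z) * φ z q = 1 := by
          simp only [hφ_def]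
          field_simp
        nlinarith [hinv, hone]
      exact Module.End.hasEigenvalue_of_hasEigenvector
        ⟨Module.End.mem_eigenspace_iff.mpr (by simpa using heq), hfne⟩
  -- existence of b < Emin with 1 < g b
  have hb : ∃ b, b < Emin ∧ 1 < g b := by
    by_contra hcon
    push_neg at hcon
    set a : ENNReal := ENNReal.ofReal (μc * c) with ha_def
    have hμcc : (0:ℝ) < μc * c := by positivity
    have ha0 : a ≠ 0 := by
      rw [ha_def]
      simp only [ne_eq, ENNReal.ofReal_eq_zero, not_le]
      exact hμcc
    have haT : a ≠ ⊤ := ENNReal.ofReal_ne_top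
    set zn : ℕ → ℝ := fun n => Emin - 1/(n+1) with hzn_def
    have hznE : ∀ n : ℕ, zn n < Emin := by
      intro n
      have : (0:ℝ) < 1/((n:ℝ)+1) := by positivity
      simp only [hzn_def]
      linarith
    have hLe : ∀ n : ℕ, ∫⁻ q, ENNReal.ofReal (φ (zn n) q) ∂μT ≤ a⁻¹ := by
      intro n
      have hnn : 0 ≤ᵐ[μT] φ (zn n) := (hφpos _ (hznE n)).mono fun q hq => hq.le
      rw [← ofReal_integral_eq_lintegral_ofReal (hint _ (hznE n)) hnn]
      rw [ENNReal.le_inv_iff_mul_le, mul_comm, ha_def,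
        ← ENNReal.ofReal_mul hμcc.le]
      calc ENNReal.ofReal (μc * c * ∫ q, φ (zn n) q ∂μT)
          ≤ ENNReal.ofReal 1 := ENNReal.ofReal_le_ofReal (hcon _ (hznE n))
        _ = 1 := ENNReal.ofReal_one
    have hFat : (∫⁻ q, ENNReal.ofReal ((E q - Emin)⁻¹) ∂μT) ≤ a⁻¹ := by
      have hmeasn : ∀ n : ℕ, Measurable fun q => ENNReal.ofReal (φ (zn n) q) :=
        fun n => (hφmeas _).ennreal_ofReal
      have hlim : ∀ᵐ q ∂μT, ENNReal.ofReal ((E q - Emin)⁻¹) ≤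
          Filter.liminf (fun n => ENNReal.ofReal (φ (zn n) q)) Filter.atTop := by
        filter_upwards [hlow] with q hq
        rcases eq_or_lt_of_le hq with heq | hlt
        · rw [← heq]
          simp
        · have hfun : (fun n : ℕ => ENNReal.ofReal (φ (zn n) q))
              = fun n : ℕ => ENNReal.ofReal (((E q - Emin) + 1/(n+1))⁻¹) := by
            funext n
            simp only [hφ_def, hzn_def]
            congr 2
            ring
          have h1 : Filter.Tendsto (fun n : ℕ => (E q - Emin) + 1/(n+1)) Filter.atTop
              (nhds ((E q - Emin) + 0)) :=
            tendsto_const_nhds.add tendsto_one_div_add_atTop_nhds_zero_nat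
          rw [add_zero] at h1
          have h2 := h1.inv₀ (ne_of_gt (by linarith))
          have htd : Filter.Tendsto (fun n : ℕ => ENNReal.ofReal (φ (zn n) q))
              Filter.atTop (nhds (ENNReal.ofReal ((E q - Emin)⁻¹))) := by
            rw [hfun]
            exact (ENNReal.continuous_ofReal.tendsto _).comp h2
          exact le_of_eq htd.liminf_eq.symm
      calc ∫⁻ q, ENNReal.ofReal ((E q - Emin)⁻¹) ∂μT
          ≤ ∫⁻ q, Filter.liminf (fun n => ENNReal.ofReal (φ (zn n) q)) Filter.atTop ∂μT :=
            lintegral_mono_ae hlim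
        _ ≤ Filter.liminf (fun n => ∫⁻ q, ENNReal.ofReal (φ (zn n) q) ∂μT) Filter.atTop :=
            lintegral_liminf_le hmeasn
        _ ≤ a⁻¹ := by
            refine Filter.liminf_le_of_frequently_le ?_
            exact Filter.Frequently.of_forall hLe
    have hfin : ENNReal.ofReal (μc * c) * ∫⁻ q, ENNReal.ofReal ((E q - Emin)⁻¹) ∂μT ≤ 1 := by
      calc ENNReal.ofReal (μc * c) * ∫⁻ q, ENNReal.ofReal ((E q - Emin)⁻¹) ∂μT
          ≤ a * a⁻¹ := mul_le_mul_right hFat a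
        _ = 1 := ENNReal.mul_inv_cancel ha0 haT
    exact absurd hneg (not_lt.mpr hfin)
  obtain ⟨b, hbE, hgb⟩ := hb
  set a0 : ℝ := min (b - 1) (Emin - (μc * c * M + 1)) with ha0_def
  have ha0b : a0 ≤ b := le_trans (min_le_left _ _) (by linarith)
  have ha0E : a0 < Emin := lt_of_lt_of_le (lt_of_le_of_lt (min_le_left _ _) (by linarith : b - 1 < b)) hbE.le
  have hga : g a0 < 1 := by
    have hbound : ∫ q, φ a0 q ∂μT ≤ (Emin - a0)⁻¹ * M := by
      have h4 := integral_mono_ae (hint a0 ha0E) (integrable_const ((Emin - a0)⁻¹))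
        ((hbounds a0 ha0E).mono fun q hq => hq.2)
      simpa [integral_const, smul_eq_mul, hM_def, mul_comm, Measure.real] using h4
    have hden : μc * c * M + 1 ≤ Emin - a0 := by
      have h5 := min_le_right (b - 1) (Emin - (μc * c * M + 1))
      rw [← ha0_def] at h5
      linarith
    have hpos1 : (0:ℝ) < μc * c * M + 1 := by positivity
    have hinv : (Emin - a0)⁻¹ ≤ (μc * c * M + 1)⁻¹ := inv_anti₀ hpos1 hden
    have h6 : g a0 ≤ μc * c * ((μc * c * M + 1)⁻¹ * M) := by
      simp only [hg_def]
      apply mul_le_mul_of_nonneg_left _ (by positivity)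
      calc ∫ q, φ a0 q ∂μT ≤ (Emin - a0)⁻¹ * M := hbound
        _ ≤ (μc * c * M + 1)⁻¹ * M := mul_le_mul_of_nonneg_right hinv hM.le
    have hlt : μc * c * ((μc * c * M + 1)⁻¹ * M) < 1 := by
      rw [mul_comm ((μc * c * M + 1)⁻¹) M, ← mul_assoc, ← div_eq_mul_inv]
      exact (div_lt_one hpos1).mpr (by nlinarith)
    linarith
  have hcontOn : ContinuousOn g (Icc a0 b) := fun x hx =>
    (hcont x (mem_Iio.mpr (lt_of_le_of_lt hx.2 hbE))).continuousWithinAt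
  obtain ⟨z, hzmem, hz1⟩ := intermediate_value_Icc ha0b hcontOn ⟨hga.le, hgb.le⟩
  have hzE : z < Emin := lt_of_le_of_lt hzmem.2 hbE
  refine ⟨z, ⟨hzE, (key z hzE).mpr hz1⟩, ?_⟩
  rintro y ⟨hyE, hy⟩
  exact hmono.injOn (mem_Iio.mpr hyE) (mem_Iio.mpr hzE) (by rw [(key y hyE).mp hy, hz1])
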